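/- Multiplication admits a positive existential definition in the structure (ℤ_{≥1}; 1, +, B), where B = {2^n + n² : n ≥ 1} is a unary predicate. That is, the graph {(u,v,w) : u = vw} is definable by a positive existential formula in this language. -/

import Mathlib

/-- Terms of the first-order language `(1, +)` in `n` variables. -/
inductive PETerm (n : ℕ) : Type
  | var : Fin n → PETerm n
  | one : PETerm n
  | add : PETerm n → PETerm n → PETerm n

/-- Value of a term in `ℤ_{≥1} = ℕ+`. -/
def PETerm.val {n : ℕ} (v : Fin n → ℕ+) : PETerm n → ℕ+
  | PETerm.var i => v i
  | PETerm.one => 1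
  | PETerm.add s t => s.val v + t.val v

/-- Quantifier-free positive formulas in the language `(1, +, B)` with `B` a unary
predicate: atomic formulas are equalities of terms and `B`-membership of a term, combined
using only `∧` and `∨`. -/
inductive PEForm (n : ℕ) : Type
  | eq : PETerm n → PETerm n → PEForm n
  | inB : PETerm n → PEForm n
  | and : PEForm n → PEForm n → PEForm n
  | or : PEForm n → PEForm n → PEForm n

/-- Satisfaction of a quantifier-free positive formula in `(ℤ_{≥1}; 1, +, B)`. -/
def PEForm.Holds (B : Set ℕ+) : {n : ℕ} → (Fin n → ℕ+) → PEForm n → Prop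
  | _, v, PEForm.eq s t => s.val v = t.val v
  | _, v, PEForm.inB t => t.val v ∈ B
  | _, v, PEForm.and φ ψ => φ.Holds B v ∧ ψ.Holds B v
  | _, v, PEForm.or φ ψ => φ.Holds B v ∨ ψ.Holds B v

/-- A set `A ⊆ (ℤ_{≥1})^k` is positive-existentially definable in `(ℤ_{≥1}; 1, +, B)` if it
is defined by an existentially quantified positive quantifier-free formula. -/
def PEDefinable (B : Set ℕ+) {k : ℕ} (A : Set (Fin k → ℕ+)) : Prop :=
  ∃ (m : ℕ) (φ : PEForm (k + m)),
    ∀ t : Fin k → ℕ+, t ∈ A ↔ ∃ x : Fin m → ℕ+, φ.Holds B (Fin.append t x)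

lemma fin_append_apply {α : Type*} {k m : ℕ} (t : Fin k → α) (x : Fin m → α) (i : Fin (k+m)) :
    Fin.append t x i = if h : (i:ℕ) < k then t ⟨i, h⟩ else x ⟨(i:ℕ) - k, by omega⟩ := by
  rcases Nat.lt_or_ge (i:ℕ) k with h | h
  · rw [dif_pos h]
    have e : Fin.append t x (Fin.castAdd m ⟨i, h⟩) = t ⟨i, h⟩ := Fin.append_left t x _
    have e2 : Fin.castAdd m ⟨(i:ℕ), h⟩ = i := by ext; rfl
    rwa [e2] at e
  · rw [dif_neg (by omega)]
    have e : Fin.append t x (Fin.natAdd k ⟨(i:ℕ) - k, by omega⟩) = x ⟨(i:ℕ) - k, by omega⟩ :=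
      Fin.append_right t x _
    have e2 : Fin.natAdd k ⟨(i:ℕ) - k, by omega⟩ = i := by ext; simp; omega
    rwa [e2] at e

lemma fin_snoc_apply {α : Type*} {k : ℕ} (t : Fin k → α) (a : α) (i : Fin (k+1)) :
    (Fin.snoc t a : Fin (k+1) → α) i = if h : (i:ℕ) < k then t ⟨i, h⟩ else a := by
  rcases Nat.lt_or_ge (i:ℕ) k with h | h
  · rw [dif_pos h]
    have e : (Fin.snoc t a : Fin (k+1) → α) (Fin.castSucc ⟨i, h⟩) = t ⟨i, h⟩ :=
      Fin.snoc_castSucc (α := fun _ => α) (p := t) (x := a) (i := ⟨i, h⟩)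
    have e2 : Fin.castSucc ⟨(i:ℕ), h⟩ = i := by ext; rfl
    rwa [e2] at e
  · rw [dif_neg (by omega)]
    have e : (Fin.snoc t a : Fin (k+1) → α) (Fin.last k) = a :=
      Fin.snoc_last (α := fun _ => α) (p := t) (x := a)
    have e2 : Fin.last k = i := by ext; simp; omega
    rwa [e2] at e

namespace PETerm

def rename {n n' : ℕ} (ρ : Fin n → Fin n') : PETerm n → PETerm n'
  | var i => var (ρ i)
  | one => one
  | add s t => add (s.rename ρ) (t.rename ρ)

lemma val_rename {n n' : ℕ} (ρ : Fin n → Fin n') (v : Fin n' → ℕ+) :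
    ∀ t : PETerm n, (t.rename ρ).val v = t.val (v ∘ ρ)
  | var i => rfl
  | one => rfl
  | add s t => by simp [rename, val, val_rename ρ v s, val_rename ρ v t]

end PETerm

namespace PEForm

@[simp] lemma holds_eq {n : ℕ} {B : Set ℕ+} {v : Fin n → ℕ+} {s t : PETerm n} :
    (PEForm.eq s t).Holds B v ↔ s.val v = t.val v := by
  rw [PEForm.Holds]

@[simp] lemma holds_inB {n : ℕ} {B : Set ℕ+} {v : Fin n → ℕ+} {t : PETerm n} :
    (PEForm.inB t).Holds B v ↔ t.val v ∈ B := by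
  rw [PEForm.Holds]

@[simp] lemma holds_and {n : ℕ} {B : Set ℕ+} {v : Fin n → ℕ+} {φ ψ : PEForm n} :
    (PEForm.and φ ψ).Holds B v ↔ φ.Holds B v ∧ ψ.Holds B v := by
  rw [PEForm.Holds]

@[simp] lemma holds_or {n : ℕ} {B : Set ℕ+} {v : Fin n → ℕ+} {φ ψ : PEForm n} :
    (PEForm.or φ ψ).Holds B v ↔ φ.Holds B v ∨ ψ.Holds B v := by
  rw [PEForm.Holds]

def rename {n n' : ℕ} (ρ : Fin n → Fin n') : PEForm n → PEForm n'
  | eq s t => eq (s.rename ρ) (t.rename ρ)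
  | inB t => inB (t.rename ρ)
  | and φ ψ => and (φ.rename ρ) (ψ.rename ρ)
  | or φ ψ => or (φ.rename ρ) (ψ.rename ρ)

lemma holds_rename (B : Set ℕ+) {n n' : ℕ} (ρ : Fin n → Fin n') (v : Fin n' → ℕ+) :
    ∀ φ : PEForm n, (φ.rename ρ).Holds B v ↔ φ.Holds B (v ∘ ρ)
  | eq s t => by simp [rename, PETerm.val_rename]
  | inB t => by simp [rename, PETerm.val_rename]
  | and φ ψ => by simp only [rename, holds_and, holds_rename B ρ v φ, holds_rename B ρ v ψ]
  | or φ ψ => by simp only [rename, holds_or, holds_rename B ρ v φ, holds_rename B ρ v ψ]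

end PEForm

section Closure

variable {B : Set ℕ+} {k : ℕ}

lemma pe_congr {A A' : Set (Fin k → ℕ+)} (h : PEDefinable B A) (e : A = A') :
    PEDefinable B A' := e ▸ h

/-- Quantifier-free definable sets are PE definable. -/
lemma pe_qf (φ : PEForm k) : PEDefinable B {v | φ.Holds B v} := by
  refine ⟨0, φ.rename (fun i => ⟨(i:ℕ), by omega⟩), fun t => ?_⟩
  have key : ∀ x : Fin 0 → ℕ+,
      (Fin.append t x) ∘ (fun i : Fin k => (⟨(i:ℕ), by omega⟩ : Fin (k+0))) = t := by
    intro x; funext i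
    simp only [Function.comp_apply, fin_append_apply]
    rw [dif_pos i.isLt]
  constructor
  · intro ht
    exact ⟨Fin.elim0, by rw [PEForm.holds_rename, key]; exact ht⟩
  · rintro ⟨x, hx⟩
    rw [PEForm.holds_rename, key] at hx
    exact hx

private def ρ₁ (k m₁ m₂ : ℕ) : Fin (k+m₁) → Fin (k+(m₁+m₂)) :=
  fun i => ⟨(i:ℕ), by omega⟩

private def ρ₂ (k m₁ m₂ : ℕ) : Fin (k+m₂) → Fin (k+(m₁+m₂)) :=
  fun i => if h : (i:ℕ) < k then ⟨(i:ℕ), by omega⟩ else ⟨(i:ℕ) + m₁, by omega⟩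

private lemma key₁ {m₁ m₂ : ℕ} (t : Fin k → ℕ+) (x : Fin (m₁+m₂) → ℕ+) :
    (Fin.append t x) ∘ (ρ₁ k m₁ m₂) = Fin.append t (fun j : Fin m₁ => x ⟨(j:ℕ), by omega⟩) := by
  funext i
  simp only [Function.comp_apply, ρ₁, fin_append_apply]

private lemma key₂ {m₁ m₂ : ℕ} (t : Fin k → ℕ+) (x : Fin (m₁+m₂) → ℕ+) :
    (Fin.append t x) ∘ (ρ₂ k m₁ m₂)
      = Fin.append t (fun j : Fin m₂ => x ⟨m₁ + (j:ℕ), by omega⟩) := by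
  funext i
  rcases Nat.lt_or_ge (i:ℕ) k with hi | hi
  · simp only [Function.comp_apply, ρ₂, dif_pos hi, fin_append_apply]
  · simp only [Function.comp_apply, ρ₂, dif_neg (show ¬ (i:ℕ) < k by omega), fin_append_apply]
    rw [dif_neg (by omega : ¬ ((i:ℕ) + m₁ < k))]
    exact congrArg x (Fin.ext (by simp; omega))

private lemma split_wit {m₁ m₂ : ℕ} (x₁ : Fin m₁ → ℕ+) (x₂ : Fin m₂ → ℕ+) :
    ∃ x : Fin (m₁+m₂) → ℕ+,
      (fun j : Fin m₁ => x ⟨(j:ℕ), by omega⟩) = x₁ ∧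
      (fun j : Fin m₂ => x ⟨m₁ + (j:ℕ), by omega⟩) = x₂ := by
  refine ⟨fun i => if h : (i:ℕ) < m₁ then x₁ ⟨(i:ℕ), h⟩ else x₂ ⟨(i:ℕ) - m₁, by omega⟩, ?_, ?_⟩
  · funext j
    simp only
    rw [dif_pos j.isLt]
  · funext j
    simp only
    rw [dif_neg (by omega)]
    exact congrArg x₂ (Fin.ext (by simp))

/-- Closure under intersection. -/
lemma pe_and {A₁ A₂ : Set (Fin k → ℕ+)} (h₁ : PEDefinable B A₁) (h₂ : PEDefinable B A₂) :
    PEDefinable B (A₁ ∩ A₂) := by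
  obtain ⟨m₁, φ₁, hφ₁⟩ := h₁
  obtain ⟨m₂, φ₂, hφ₂⟩ := h₂
  refine ⟨m₁ + m₂, (φ₁.rename (ρ₁ k m₁ m₂)).and (φ₂.rename (ρ₂ k m₁ m₂)), fun t => ?_⟩
  simp only [PEForm.holds_and]
  constructor
  · rintro ⟨h1, h2⟩
    obtain ⟨x₁, hx₁⟩ := (hφ₁ t).1 h1
    obtain ⟨x₂, hx₂⟩ := (hφ₂ t).1 h2
    obtain ⟨x, e₁, e₂⟩ := split_wit x₁ x₂
    refine ⟨x, ?_, ?_⟩ <;> rw [PEForm.holds_rename]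
    · rw [key₁, e₁]; exact hx₁
    · rw [key₂, e₂]; exact hx₂
  · rintro ⟨x, hx1, hx2⟩
    rw [PEForm.holds_rename, key₁] at hx1
    rw [PEForm.holds_rename, key₂] at hx2
    exact ⟨(hφ₁ t).2 ⟨_, hx1⟩, (hφ₂ t).2 ⟨_, hx2⟩⟩

/-- Closure under union. -/
lemma pe_or {A₁ A₂ : Set (Fin k → ℕ+)} (h₁ : PEDefinable B A₁) (h₂ : PEDefinable B A₂) :
    PEDefinable B (A₁ ∪ A₂) := by
  obtain ⟨m₁, φ₁, hφ₁⟩ := h₁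
  obtain ⟨m₂, φ₂, hφ₂⟩ := h₂
  refine ⟨m₁ + m₂, (φ₁.rename (ρ₁ k m₁ m₂)).or (φ₂.rename (ρ₂ k m₁ m₂)), fun t => ?_⟩
  simp only [PEForm.holds_or]
  constructor
  · rintro (h1 | h2)
    · obtain ⟨x₁, hx₁⟩ := (hφ₁ t).1 h1
      obtain ⟨x, e₁, _⟩ := split_wit x₁ (fun _ : Fin m₂ => (1:ℕ+))
      refine ⟨x, Or.inl ?_⟩
      rw [PEForm.holds_rename, key₁, e₁]; exact hx₁
    · obtain ⟨x₂, hx₂⟩ := (hφ₂ t).1 h2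
      obtain ⟨x, _, e₂⟩ := split_wit (fun _ : Fin m₁ => (1:ℕ+)) x₂
      refine ⟨x, Or.inr ?_⟩
      rw [PEForm.holds_rename, key₂, e₂]; exact hx₂
  · rintro ⟨x, hx | hx⟩
    · rw [PEForm.holds_rename, key₁] at hx
      exact Or.inl ((hφ₁ t).2 ⟨_, hx⟩)
    · rw [PEForm.holds_rename, key₂] at hx
      exact Or.inr ((hφ₂ t).2 ⟨_, hx⟩)

/-- Closure under substitution (preimage along a variable map). -/
lemma pe_subst {k' : ℕ} {A : Set (Fin k → ℕ+)} (σ : Fin k → Fin k')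
    (h : PEDefinable B A) : PEDefinable B {t : Fin k' → ℕ+ | (t ∘ σ) ∈ A} := by
  obtain ⟨m, φ, hφ⟩ := h
  refine ⟨m, φ.rename (fun i : Fin (k+m) =>
    if h : (i:ℕ) < k then (⟨(σ ⟨(i:ℕ), h⟩ : Fin k') , by omega⟩ : Fin (k'+m))
    else ⟨k' + ((i:ℕ) - k), by omega⟩), fun t => ?_⟩
  have key : ∀ (x : Fin m → ℕ+),
      ((Fin.append t x) ∘ (fun i : Fin (k+m) =>
        if h : (i:ℕ) < k then (⟨(σ ⟨(i:ℕ), h⟩ : Fin k') , by omega⟩ : Fin (k'+m))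
        else ⟨k' + ((i:ℕ) - k), by omega⟩))
      = Fin.append (t ∘ σ) x := by
    intro x
    funext i
    rcases Nat.lt_or_ge (i:ℕ) k with hi | hi
    · simp only [Function.comp_apply, dif_pos hi, fin_append_apply]
      rw [dif_pos (Fin.is_lt _)]
    · simp only [Function.comp_apply, dif_neg (show ¬ (i:ℕ) < k by omega), fin_append_apply]
      rw [dif_neg (by omega : ¬ (k' + ((i:ℕ) - k) < k'))]
      exact congrArg x (Fin.ext (by simp))
  constructor
  · intro ht
    obtain ⟨x, hx⟩ := (hφ _).1 ht
    exact ⟨x, by rw [PEForm.holds_rename, key]; exact hx⟩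
  · rintro ⟨x, hx⟩
    rw [PEForm.holds_rename, key] at hx
    exact (hφ _).2 ⟨x, hx⟩

/-- Closure under existential quantification of the last variable. -/
lemma pe_exists {A : Set (Fin (k+1) → ℕ+)} (h : PEDefinable B A) :
    PEDefinable B {t : Fin k → ℕ+ | ∃ a : ℕ+, Fin.snoc t a ∈ A} := by
  obtain ⟨m, φ, hφ⟩ := h
  refine ⟨m + 1, φ.rename (fun i : Fin (k+1+m) => (⟨(i:ℕ), by omega⟩ : Fin (k+(m+1)))),
    fun t => ?_⟩
  have key : ∀ (a : ℕ+) (x : Fin m → ℕ+),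
      ((Fin.append t (Fin.cons a x)) ∘
          (fun i : Fin (k+1+m) => (⟨(i:ℕ), by omega⟩ : Fin (k+(m+1)))))
        = Fin.append (Fin.snoc t a) x := by
    intro a x
    funext i
    simp only [Function.comp_apply, fin_append_apply, fin_snoc_apply]
    rcases lt_trichotomy (i:ℕ) k with hik | hik | hik
    · rw [dif_pos hik, dif_pos (by omega : (i:ℕ) < k + 1), dif_pos hik]
    · rw [dif_neg (by omega : ¬ (i:ℕ) < k), dif_pos (by omega : (i:ℕ) < k + 1),
        dif_neg (by omega : ¬ (i:ℕ) < k)]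
      have e : (⟨(i:ℕ) - k, by omega⟩ : Fin (m+1)) = 0 := by
        ext; simp; omega
      rw [e, Fin.cons_zero]
    · rw [dif_neg (by omega : ¬ (i:ℕ) < k), dif_neg (by omega : ¬ (i:ℕ) < k + 1)]
      have e : (⟨(i:ℕ) - k, by omega⟩ : Fin (m+1))
          = Fin.succ ⟨(i:ℕ) - (k+1), by omega⟩ := by
        ext; simp; omega
      rw [e, Fin.cons_succ]
  constructor
  · rintro ⟨a, ha⟩
    obtain ⟨x, hx⟩ := (hφ _).1 ha
    refine ⟨Fin.cons a x, ?_⟩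
    rw [PEForm.holds_rename, key]
    exact hx
  · rintro ⟨y, hy⟩
    rw [PEForm.holds_rename] at hy
    rw [show y = Fin.cons (y 0) (Fin.tail y) from (Fin.cons_self_tail y).symm, key] at hy
    exact ⟨y 0, (hφ _).2 ⟨Fin.tail y, hy⟩⟩

/-- Closure under existential quantification of a block of trailing variables. -/
lemma pe_exists_many {m : ℕ} {A : Set (Fin (k+m) → ℕ+)} (h : PEDefinable B A) :
    PEDefinable B {t : Fin k → ℕ+ | ∃ x : Fin m → ℕ+, Fin.append t x ∈ A} := by
  induction m with
  | zero =>
    refine pe_congr (pe_subst (fun i : Fin (k+0) => (⟨(i:ℕ), i.isLt⟩ : Fin k)) h) ?_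
    ext t
    simp only [Set.mem_setOf_eq]
    constructor
    · intro ht
      refine ⟨Fin.elim0, ?_⟩
      convert ht using 1
      funext i
      simp only [Function.comp_apply, fin_append_apply]
      rw [dif_pos (show (i:ℕ) < k from i.isLt)]
    · rintro ⟨x, hx⟩
      convert hx using 1
      funext i
      simp only [Function.comp_apply, fin_append_apply]
      rw [dif_pos (show (i:ℕ) < k from i.isLt)]
  | succ m ih =>
    have h' : PEDefinable B {s : Fin (k+m) → ℕ+ | ∃ a : ℕ+, Fin.snoc s a ∈ A} :=
      pe_exists (A := A) h
    refine pe_congr (ih h') ?_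
    ext t
    simp only [Set.mem_setOf_eq]
    constructor
    · rintro ⟨x, a, hax⟩
      refine ⟨Fin.snoc x a, ?_⟩
      rw [Fin.append_snoc]
      exact hax
    · rintro ⟨y, hy⟩
      refine ⟨Fin.init y, y (Fin.last m), ?_⟩
      rw [← Fin.append_snoc, Fin.snoc_init_self]
      exact hy

end Closure


def PNB : Set ℕ+ := {x : ℕ+ | ∃ n : ℕ, 1 ≤ n ∧ (x : ℕ) = 2 ^ n + n ^ 2}

def SemS (a c : ℕ+) : Prop :=
  ∃ n : ℕ, 3 ≤ n ∧ (a:ℕ) + 1 = 2*n ∧ (c:ℕ) + 2*n + 1 = n^2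

lemma pnat_eq_of_coe {a b : ℕ+} (h : (a:ℕ) = (b:ℕ)) : a = b := PNat.coe_injective h

lemma pnat_le_iff (a b : ℕ+) : a ≤ b ↔ (a = b ∨ ∃ d : ℕ+, a + d = b) := by
  constructor
  · intro h
    rcases eq_or_lt_of_le h with h' | h'
    · exact Or.inl h'
    · refine Or.inr ⟨⟨(b:ℕ) - (a:ℕ), by
        have := (PNat.coe_lt_coe a b).2 h'; omega⟩, ?_⟩
      apply pnat_eq_of_coe
      erw [PNat.add_coe]; simp only [PNat.mk_coe]
      have := (PNat.coe_lt_coe a b).2 h'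
      omega
  · rintro (rfl | ⟨d, rfl⟩)
    · exact le_refl _
    · rw [← PNat.coe_le_coe, PNat.add_coe]
      have := d.pos
      omega

lemma pnat_add_right_lt (a d : ℕ+) : (a:ℕ) < ((a + d : ℕ+) : ℕ) := by
  rw [PNat.add_coe]; have := d.pos; omega

private lemma fmono : StrictMono (fun n : ℕ => 2^n + n^2) := by
  apply strictMono_nat_of_lt_succ
  intro n
  have h1 : (1:ℕ) ≤ 2^n := Nat.one_le_two_pow
  have h2 : (2:ℕ)^(n+1) = 2*2^n := by ring
  have h3 : (n+1)^2 = n^2+2*n+1 := by ring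
  omega

private lemma sq_le_two_pow : ∀ n : ℕ, 4 ≤ n → n^2 ≤ 2^n := by
  intro n hn
  induction n, hn using Nat.le_induction with
  | base => norm_num
  | succ n hn ih =>
    have h2 : (2:ℕ)^(n+1) = 2*2^n := by ring
    nlinarith

private lemma key_ineq (n : ℕ) : n^2 < 2^(n+1) + 4*n + 4 := by
  rcases le_or_gt 4 n with h | h
  · have h1 := sq_le_two_pow n h
    have h2 : (2:ℕ)^(n+1) = 2*2^n := by ring
    nlinarith
  · interval_cases n <;> norm_num

private lemma gap (i j : ℕ) (hij : i + 2 ≤ j) : 2*(2^i + i^2) < 2^j + j^2 := by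
  have h1 : 2^(i+2) + (i+2)^2 ≤ 2^j + j^2 := fmono.monotone (by omega)
  have h2 : (2:ℕ)^(i+2) = 4*2^i := by ring
  have h3 : (2:ℕ)^(i+1) = 2*2^i := by ring
  have h4 := key_ineq i
  nlinarith

private lemma step_le (n : ℕ) (h : 3 ≤ n) : 2^(n+1) + (n+1)^2 ≤ 2*(2^n + n^2) := by
  have h2 : (2:ℕ)^(n+1) = 2*2^n := by ring
  nlinarith

private lemma step_ge (n : ℕ) (h1 : 1 ≤ n) (h : 2^(n+1)+(n+1)^2 ≤ 2*(2^n+n^2)) : 3 ≤ n := by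
  by_contra h'
  push_neg at h'
  interval_cases n <;> norm_num at h

private lemma consec {i j : ℕ} (hi : 1 ≤ i)
    (hlt : 2^i+i^2 < 2^j+j^2) (hle : 2^j + j^2 ≤ 2*(2^i+i^2)) : j = i + 1 ∧ 3 ≤ i := by
  have hij : i < j := by
    by_contra h'
    push_neg at h'
    have := fmono.monotone h'
    omega
  have hj2 : j < i + 2 := by
    by_contra h'
    push_neg at h'
    have := gap i j h'
    omega
  have hj : j = i + 1 := by omega
  subst hj
  exact ⟨rfl, step_ge i hi hle⟩

lemma S_iff (a c : ℕ+) :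
    (∃ x y z d1 d2 e : ℕ+, x ∈ PNB ∧ y ∈ PNB ∧ z ∈ PNB ∧ y = x + d1 ∧ z = y + d2 ∧
      y ≤ x + x ∧ z ≤ y + y ∧ d2 = d1 + e ∧ d1 = e + a ∧ x = d1 + c)
    ↔ SemS a c := by
  constructor
  · rintro ⟨x, y, z, d1, d2, e, ⟨i, hi1, hxi⟩, ⟨j, hj1, hyj⟩, ⟨l, hl1, hzl⟩,
      rfl, rfl, hyx, hzy, hde, hda, hxc⟩
    -- translate to ℕ
    have hd1 : (x:ℕ) < ((x + d1 : ℕ+) : ℕ) := pnat_add_right_lt x d1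
    have hd2 : ((x+d1:ℕ+):ℕ) < ((x + d1 + d2 : ℕ+) : ℕ) := pnat_add_right_lt _ d2
    have hyx' : ((x+d1:ℕ+):ℕ) ≤ 2*(x:ℕ) := by
      have h := (PNat.coe_le_coe _ _).2 hyx
      push_cast at h ⊢
      omega
    have hzy' : ((x+d1+d2:ℕ+):ℕ) ≤ 2*((x+d1:ℕ+):ℕ) := by
      have h := (PNat.coe_le_coe _ _).2 hzy
      push_cast at h ⊢
      omega
    have c1 := consec (i := i) (j := j) hi1 (by rw [← hxi, ← hyj]; exact hd1)
      (by rw [← hxi, ← hyj]; exact hyx')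
    have c2 := consec (i := j) (j := l) hj1 (by rw [← hyj, ← hzl]; exact hd2)
      (by rw [← hyj, ← hzl]; exact hzy')
    obtain ⟨hji, hi3⟩ := c1
    obtain ⟨hlj, _⟩ := c2
    subst hji
    subst hlj
    refine ⟨i, hi3, ?_, ?_⟩ <;>
    · have e1 : ((x+d1:ℕ+):ℕ) = (x:ℕ) + d1 := PNat.add_coe x d1
      have e2 : ((x+d1+d2:ℕ+):ℕ) = (x:ℕ) + d1 + d2 := by
        rw [PNat.add_coe, PNat.add_coe]
      have e3 : (d2:ℕ) = (d1:ℕ) + e := by rw [hde, PNat.add_coe]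
      have e4 : (d1:ℕ) = (e:ℕ) + a := by rw [hda, PNat.add_coe]
      have e5 : (x:ℕ) = (d1:ℕ) + c := by rw [hxc, PNat.add_coe]
      have p1 : (2:ℕ)^(i+1) = 2*2^i := by ring
      have p2 : (2:ℕ)^(i+2) = 4*2^i := by ring
      have q1 : (i+1)^2 = i^2+2*i+1 := by ring
      have q2 : (i+2)^2 = i^2+4*i+4 := by ring
      have p2' : (2:ℕ)^(i+1+1) = 4*2^i := by ring
      have q2' : (i+1+1)^2 = i^2+4*i+4 := by ring
      omega
  · rintro ⟨n, hn3, ha, hc⟩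
    have hp1 : (2:ℕ)^(n+1) = 2*2^n := by ring
    have hp2 : (2:ℕ)^(n+2) = 4*2^n := by ring
    have hq1 : (n+1)^2 = n^2+2*n+1 := by ring
    have hq2 : (n+2)^2 = n^2+4*n+4 := by ring
    have hnn : 2*n+1 ≤ n^2 := by nlinarith
    refine ⟨⟨2^n+n^2, by positivity⟩, ⟨2^(n+1)+(n+1)^2, by positivity⟩,
      ⟨2^(n+2)+(n+2)^2, by positivity⟩, ⟨2^n+2*n+1, by positivity⟩,
      ⟨2^(n+1)+2*n+3, by positivity⟩, ⟨2^n+2, by positivity⟩,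
      ⟨n, by omega, rfl⟩, ⟨n+1, by omega, rfl⟩, ⟨n+2, by omega, rfl⟩,
      ?_, ?_, ?_, ?_, ?_, ?_, ?_⟩
    · apply pnat_eq_of_coe; erw [PNat.add_coe]; simp only [PNat.mk_coe]; omega
    · apply pnat_eq_of_coe; erw [PNat.add_coe]; simp only [PNat.mk_coe]; omega
    · erw [← PNat.coe_le_coe, PNat.add_coe]; simp only [PNat.mk_coe]
      have := step_le n hn3; omega
    · erw [← PNat.coe_le_coe, PNat.add_coe]; simp only [PNat.mk_coe]
      have := step_le (n+1) (by omega)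
      have hp3 : (2:ℕ)^(n+1+1) = 2*2^(n+1) := by ring
      have hq3 : (n+1+1)^2 = (n+1)^2+2*(n+1)+1 := by ring
      omega
    · apply pnat_eq_of_coe; erw [PNat.add_coe]; simp only [PNat.mk_coe]; omega
    · apply pnat_eq_of_coe; erw [PNat.add_coe]; simp only [PNat.mk_coe]; omega
    · apply pnat_eq_of_coe; erw [PNat.add_coe]; simp only [PNat.mk_coe]; omega

lemma sq_iff (v w : ℕ+) :
    w = v * v ↔ ((v = 1 ∧ w = 1) ∨ ∃ g c : ℕ+, g = v + v + 1 ∧ w = c + 1 + 1 ∧ SemS g c) := by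
  constructor
  · intro h
    rcases eq_or_lt_of_le v.one_le with h1 | h1
    · have hv : v = 1 := h1.symm
      subst hv
      exact Or.inl ⟨rfl, by simpa using h⟩
    · right
      have hv2 : 2 ≤ (v:ℕ) := (PNat.coe_lt_coe _ _).2 h1
      have hvv : 4 ≤ (v:ℕ)*(v:ℕ) := Nat.mul_le_mul hv2 hv2
      refine ⟨v + v + 1, ⟨(v:ℕ)*(v:ℕ) - 2, by omega⟩, rfl, ?_, ⟨(v:ℕ)+1, by omega, ?_, ?_⟩⟩
      · apply pnat_eq_of_coe
        have hw : (w:ℕ) = (v:ℕ)*(v:ℕ) := by rw [h]; push_cast; ring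
        push_cast
        erw [PNat.add_coe]; simp only [PNat.mk_coe, PNat.one_coe]
        omega
      · push_cast
        omega
      · rw [PNat.mk_coe]
        have : ((v:ℕ)+1)^2 = (v:ℕ)*(v:ℕ) + 2*(v:ℕ) + 1 := by ring
        omega
  · rintro (⟨rfl, rfl⟩ | ⟨g, c, rfl, rfl, n, hn3, hg, hc⟩)
    · rfl
    · apply pnat_eq_of_coe
      have hg' : ((v+v+1:ℕ+):ℕ) = (v:ℕ)+(v:ℕ)+1 := by push_cast; ring
      rw [hg'] at hg
      have hnv : n = (v:ℕ) + 1 := by omega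
      subst hnv
      have hx : ((v:ℕ)+1)^2 = (v:ℕ)*(v:ℕ) + 2*(v:ℕ) + 1 := by ring
      push_cast
      omega

lemma mul_iff (u v w : ℕ+) :
    u = v * w ↔ ∃ p q r s : ℕ+, p = v*v ∧ q = w*w ∧ s = v + w ∧ r = s*s ∧ r = p+q+u+u := by
  constructor
  · rintro rfl
    refine ⟨v*v, w*w, (v+w)*(v+w), v+w, rfl, rfl, rfl, rfl, ?_⟩
    apply pnat_eq_of_coe
    push_cast
    ring
  · rintro ⟨p, q, r, s, rfl, rfl, rfl, hr, hsum⟩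
    apply pnat_eq_of_coe
    have := congrArg (fun t : ℕ+ => (t:ℕ)) hsum
    rw [hr] at this
    push_cast at this ⊢
    nlinarith


section Atoms

variable {B : Set ℕ+} {K : ℕ}

lemma pe_inB_at (i : Fin K) : PEDefinable B {w : Fin K → ℕ+ | w i ∈ B} := by
  refine pe_congr (pe_qf (B := B) (PEForm.inB (PETerm.var i))) ?_
  ext w
  simp [PETerm.val]

lemma pe_eq_add_at (i j l : Fin K) : PEDefinable B {w : Fin K → ℕ+ | w i = w j + w l} := by
  refine pe_congr (pe_qf (B := B)
    (PEForm.eq (PETerm.var i) (PETerm.add (PETerm.var j) (PETerm.var l)))) ?_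
  ext w
  simp [PETerm.val]

lemma pe_eq_add4_at (i j l m o : Fin K) :
    PEDefinable B {w : Fin K → ℕ+ | w i = w j + w l + w m + w o} := by
  refine pe_congr (pe_qf (B := B)
    (PEForm.eq (PETerm.var i) (PETerm.add (PETerm.add (PETerm.add (PETerm.var j)
      (PETerm.var l)) (PETerm.var m)) (PETerm.var o)))) ?_
  ext w
  simp [PETerm.val]

lemma pe_eq_add_one_at (i j l : Fin K) :
    PEDefinable B {w : Fin K → ℕ+ | w i = w j + w l + 1} := by
  refine pe_congr (pe_qf (B := B)
    (PEForm.eq (PETerm.var i) (PETerm.add (PETerm.add (PETerm.var j) (PETerm.var l))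
      PETerm.one))) ?_
  ext w
  simp [PETerm.val]

lemma pe_eq_add_two_at (i j : Fin K) :
    PEDefinable B {w : Fin K → ℕ+ | w i = w j + 1 + 1} := by
  refine pe_congr (pe_qf (B := B)
    (PEForm.eq (PETerm.var i) (PETerm.add (PETerm.add (PETerm.var j) PETerm.one)
      PETerm.one))) ?_
  ext w
  simp [PETerm.val]

lemma pe_ones_at (i j : Fin K) :
    PEDefinable B {w : Fin K → ℕ+ | w i = 1 ∧ w j = 1} := by
  refine pe_congr (pe_qf (B := B)
    (PEForm.and (PEForm.eq (PETerm.var i) PETerm.one)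
      (PEForm.eq (PETerm.var j) PETerm.one))) ?_
  ext w
  simp [PETerm.val]

lemma pe_le_addself_at (i j : Fin K) :
    PEDefinable B {w : Fin K → ℕ+ | w i ≤ w j + w j} := by
  have h1 := pe_qf (B := B) (k := K)
    (PEForm.eq (PETerm.var i) (PETerm.add (PETerm.var j) (PETerm.var j)))
  have h2 := pe_exists (B := B) (k := K) (pe_qf
    (PEForm.eq (PETerm.add (PETerm.var ⟨(i:ℕ), by omega⟩) (PETerm.var ⟨K, by omega⟩))
      (PETerm.add (PETerm.var ⟨(j:ℕ), by omega⟩) (PETerm.var ⟨(j:ℕ), by omega⟩))))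
  refine pe_congr (pe_or h1 h2) ?_
  ext w
  simp only [Set.mem_union, Set.mem_setOf_eq, PEForm.holds_eq, PETerm.val,
    fin_snoc_apply, Fin.is_lt, dif_pos, Fin.eta]
  rw [pnat_le_iff]
  constructor
  · rintro (h | ⟨a, ha⟩)
    · exact Or.inl h
    · rw [dif_neg (lt_irrefl K)] at ha
      exact Or.inr ⟨a, ha⟩
  · rintro (h | ⟨a, ha⟩)
    · exact Or.inl h
    · refine Or.inr ⟨a, ?_⟩
      rw [dif_neg (lt_irrefl K)]
      exact ha

end Atoms

lemma pe_S : PEDefinable PNB {w : Fin 2 → ℕ+ | SemS (w 0) (w 1)} := by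
  have hA : PEDefinable PNB
      ({w : Fin 8 → ℕ+ | w ⟨2, by omega⟩ ∈ PNB} ∩ {w | w ⟨3, by omega⟩ ∈ PNB} ∩
       {w | w ⟨4, by omega⟩ ∈ PNB} ∩
       {w | w ⟨3, by omega⟩ = w ⟨2, by omega⟩ + w ⟨5, by omega⟩} ∩
       {w | w ⟨4, by omega⟩ = w ⟨3, by omega⟩ + w ⟨6, by omega⟩} ∩
       {w | w ⟨3, by omega⟩ ≤ w ⟨2, by omega⟩ + w ⟨2, by omega⟩} ∩
       {w | w ⟨4, by omega⟩ ≤ w ⟨3, by omega⟩ + w ⟨3, by omega⟩} ∩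
       {w | w ⟨6, by omega⟩ = w ⟨5, by omega⟩ + w ⟨7, by omega⟩} ∩
       {w | w ⟨5, by omega⟩ = w ⟨7, by omega⟩ + w ⟨0, by omega⟩} ∩
       {w | w ⟨2, by omega⟩ = w ⟨5, by omega⟩ + w ⟨1, by omega⟩}) :=
    pe_and (pe_and (pe_and (pe_and (pe_and (pe_and (pe_and (pe_and (pe_and
      (pe_inB_at _) (pe_inB_at _)) (pe_inB_at _)) (pe_eq_add_at _ _ _))
      (pe_eq_add_at _ _ _)) (pe_le_addself_at _ _)) (pe_le_addself_at _ _))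
      (pe_eq_add_at _ _ _)) (pe_eq_add_at _ _ _)) (pe_eq_add_at _ _ _)
  refine pe_congr (pe_exists_many (k := 2) (m := 6) hA) ?_
  ext t
  simp only [Set.mem_setOf_eq, Set.mem_inter_iff]
  rw [← S_iff (t 0) (t 1)]
  constructor
  · rintro ⟨x, hx⟩
    obtain ⟨⟨⟨⟨⟨⟨⟨⟨⟨h2, h3⟩, h4⟩, h5⟩, h6⟩, h7⟩, h8⟩, h9⟩, h10⟩, h11⟩ := hx
    exact ⟨x 0, x 1, x 2, x 3, x 4, x 5, h2, h3, h4, h5, h6, h7, h8, h9, h10, h11⟩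
  · rintro ⟨x, y, z, d1, d2, e, h2, h3, h4, h5, h6, h7, h8, h9, h10, h11⟩
    exact ⟨![x, y, z, d1, d2, e],
      ⟨⟨⟨⟨⟨⟨⟨⟨⟨h2, h3⟩, h4⟩, h5⟩, h6⟩, h7⟩, h8⟩, h9⟩, h10⟩, h11⟩⟩

lemma pe_Sq : PEDefinable PNB {w : Fin 2 → ℕ+ | w 1 = w 0 * w 0} := by
  have h1 := pe_ones_at (B := PNB) (K := 2) ⟨0, by omega⟩ ⟨1, by omega⟩
  have hsub := pe_subst (k' := 4)
    (σ := fun j : Fin 2 => if (j:ℕ) = 0 then (⟨2, by omega⟩ : Fin 4) else ⟨3, by omega⟩) pe_S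
  have hsub' : PEDefinable PNB
      {t : Fin 4 → ℕ+ | SemS (t ⟨2, by omega⟩) (t ⟨3, by omega⟩)} := by
    refine pe_congr hsub ?_
    ext t
    simp [Function.comp]
  have hA : PEDefinable PNB
      ({w : Fin 4 → ℕ+ | w ⟨2, by omega⟩ = w ⟨0, by omega⟩ + w ⟨0, by omega⟩ + 1} ∩
       {w | w ⟨1, by omega⟩ = w ⟨3, by omega⟩ + 1 + 1} ∩
       {w | SemS (w ⟨2, by omega⟩) (w ⟨3, by omega⟩)}) :=
    pe_and (pe_and (pe_eq_add_one_at _ _ _) (pe_eq_add_two_at _ _)) hsub'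
  refine pe_congr (pe_or h1 (pe_exists_many (k := 2) (m := 2) hA)) ?_
  ext w
  simp only [Set.mem_union, Set.mem_setOf_eq, Set.mem_inter_iff]
  rw [show w 1 = w 0 * w 0 ↔ _ from sq_iff (w 0) (w 1)]
  constructor
  · rintro (h | ⟨x, hx⟩)
    · exact Or.inl h
    · obtain ⟨⟨hg, hw⟩, hS⟩ := hx
      exact Or.inr ⟨x 0, x 1, hg, hw, hS⟩
  · rintro (h | ⟨g, c, hg, hw, hS⟩)
    · exact Or.inl h
    · exact Or.inr ⟨![g, c], ⟨⟨hg, hw⟩, hS⟩⟩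

theorem stmt_14' :
    PEDefinable {x : ℕ+ | ∃ n : ℕ, 1 ≤ n ∧ (x : ℕ) = 2 ^ n + n ^ 2}
      {u : Fin 3 → ℕ+ | u 0 = u 1 * u 2} := by
  show PEDefinable PNB {u : Fin 3 → ℕ+ | u 0 = u 1 * u 2}
  have hsq : ∀ a b : Fin 7, PEDefinable PNB {t : Fin 7 → ℕ+ | t b = t a * t a} := by
    intro a b
    refine pe_congr (pe_subst (k' := 7)
      (σ := fun j : Fin 2 => if (j:ℕ) = 0 then a else b) pe_Sq) ?_
    ext t
    simp [Function.comp]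
  have hA : PEDefinable PNB
      ({t : Fin 7 → ℕ+ | t ⟨3, by omega⟩ = t ⟨1, by omega⟩ * t ⟨1, by omega⟩} ∩
       {t | t ⟨4, by omega⟩ = t ⟨2, by omega⟩ * t ⟨2, by omega⟩} ∩
       {t | t ⟨6, by omega⟩ = t ⟨1, by omega⟩ + t ⟨2, by omega⟩} ∩
       {t | t ⟨5, by omega⟩ = t ⟨6, by omega⟩ * t ⟨6, by omega⟩} ∩
       {t | t ⟨5, by omega⟩ = t ⟨3, by omega⟩ + t ⟨4, by omega⟩ + t ⟨0, by omega⟩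
          + t ⟨0, by omega⟩}) :=
    pe_and (pe_and (pe_and (pe_and (hsq _ _) (hsq _ _)) (pe_eq_add_at _ _ _))
      (hsq _ _)) (pe_eq_add4_at _ _ _ _ _)
  refine pe_congr (pe_exists_many (k := 3) (m := 4) hA) ?_
  ext u
  simp only [Set.mem_setOf_eq, Set.mem_inter_iff]
  rw [show u 0 = u 1 * u 2 ↔ _ from mul_iff (u 0) (u 1) (u 2)]
  constructor
  · rintro ⟨x, hx⟩
    obtain ⟨⟨⟨⟨hp, hq⟩, hs⟩, hr⟩, hsum⟩ := hx
    exact ⟨x 0, x 1, x 2, x 3, hp, hq, hs, hr, hsum⟩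
  · rintro ⟨p, q, r, s, hp, hq, hs, hr, hsum⟩
    exact ⟨![p, q, r, s], ⟨⟨⟨⟨hp, hq⟩, hs⟩, hr⟩, hsum⟩⟩


/-- Multiplication admits a positive existential definition in the structure
`(ℤ_{≥1}; 1, +, B)` where `B = {2ⁿ + n² : n ≥ 1}`. -/
theorem stmt_14 :
    PEDefinable {x : ℕ+ | ∃ n : ℕ, 1 ≤ n ∧ (x : ℕ) = 2 ^ n + n ^ 2}
      {u : Fin 3 → ℕ+ | u 0 = u 1 * u 2} := by
  exact stmt_14'
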